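/- For real μ > 0, β > 0, and δ ∈ ℝ, the integral ∫₀^∞ x^{μ−1} e^{−βx} sin(δx) dx equals Γ(μ) sin(μ arctan(δ/β)) / (β² + δ²)^{μ/2}. -/

import Mathlib

open MeasureTheory Set Complex Filter

lemma aux_int_real {s b : ℝ} (hs : -1 < s) (hb : 0 < b) :
    IntegrableOn (fun t : ℝ => t ^ s * Real.exp (-b * t)) (Ioi 0) := by
  simpa [Real.rpow_one] using
    integrableOn_rpow_mul_exp_neg_mul_rpow (s := s) (p := 1) (b := b) hs one_pos hb

lemma aux_meas (c : ℂ) (z : ℂ) :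
    AEStronglyMeasurable (fun t : ℝ => (t:ℂ) ^ c * Complex.exp (-(z * t)))
      (volume.restrict (Ioi 0)) := by
  apply Measurable.aestronglyMeasurable
  fun_prop

lemma aux_meas' (c : ℂ) (z : ℂ) :
    AEStronglyMeasurable (fun t : ℝ => (t:ℂ) ^ c * (Complex.exp (-(z * t)) * (-(t:ℂ))))
      (volume.restrict (Ioi 0)) := by
  apply Measurable.aestronglyMeasurable
  fun_prop

lemma aux_int_cexp {μ : ℝ} (hμ : 0 < μ) {z : ℂ} (hz : 0 < z.re) :
    IntegrableOn (fun t : ℝ => (t:ℂ) ^ ((μ:ℂ) - 1) * Complex.exp (-(z * t))) (Ioi 0) := by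
  apply Integrable.mono' (aux_int_real (by linarith : (-1:ℝ) < μ - 1) hz) (aux_meas _ _)
  filter_upwards [ae_restrict_mem measurableSet_Ioi] with t ht
  rw [norm_mul]
  have h1 : ‖(t:ℂ) ^ ((μ:ℂ) - 1)‖ = t ^ (μ - 1) := by
    rw [Complex.norm_cpow_eq_rpow_re_of_pos ht]
    norm_num
  have h2 : ‖Complex.exp (-(z * t))‖ = Real.exp (-z.re * t) := by
    rw [Complex.norm_exp]
    congr 1
    simp [Complex.mul_re]
  rw [h1, h2]

lemma aux_deriv {μ : ℝ} (hμ : 0 < μ) {z : ℂ} (hz : 0 < z.re) :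
    HasDerivAt (fun w : ℂ => ∫ t in Ioi (0:ℝ), (t:ℂ) ^ ((μ:ℂ) - 1) * Complex.exp (-(w * t)))
      (∫ t in Ioi (0:ℝ), (t:ℂ) ^ ((μ:ℂ) - 1) * (Complex.exp (-(z * t)) * (-(t:ℂ)))) z := by
  set ε := z.re / 2 with hε
  have hεpos : 0 < ε := by positivity
  refine (hasDerivAt_integral_of_dominated_loc_of_deriv_le (F := fun w (t:ℝ) => (t:ℂ) ^ ((μ:ℂ) - 1) * Complex.exp (-(w * t)))
    (F' := fun w (t:ℝ) => (t:ℂ) ^ ((μ:ℂ) - 1) * (Complex.exp (-(w * t)) * (-(t:ℂ))))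
    (bound := fun t => t ^ μ * Real.exp (-ε * t)) (Metric.ball_mem_nhds z hεpos)
    (Filter.Eventually.of_forall fun w => aux_meas _ _) (aux_int_cexp hμ hz) (aux_meas' _ _)
    ?_ (aux_int_real (by linarith) hεpos) ?_).2
  · filter_upwards [ae_restrict_mem measurableSet_Ioi] with t ht w hw
    have htp : (0:ℝ) < t := ht
    have hwre : ε < w.re := by
      have := Complex.abs_re_le_norm (w - z)
      have h2 : ‖w - z‖ < ε := by
        rwa [Metric.mem_ball, Complex.dist_eq] at hw
      have : |w.re - z.re| < ε := lt_of_le_of_lt (by simpa using Complex.abs_re_le_norm (w - z)) h2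
      have := abs_lt.mp this
      simp only [hε] at *
      linarith [this.1]
    rw [norm_mul, norm_mul]
    have h1 : ‖(t:ℂ) ^ ((μ:ℂ) - 1)‖ = t ^ (μ - 1) := by
      rw [Complex.norm_cpow_eq_rpow_re_of_pos htp]
      norm_num
    have h2 : ‖Complex.exp (-(w * t))‖ = Real.exp (-w.re * t) := by
      rw [Complex.norm_exp]
      congr 1
      simp [Complex.mul_re]
    have h3 : ‖(-(t:ℂ))‖ = t := by
      simp [abs_of_pos htp]
    rw [h1, h2, h3]
    have key : t ^ (μ - 1) * (Real.exp (-w.re * t) * t) = t ^ μ * Real.exp (-w.re * t) := by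
      rw [show μ = (μ - 1) + 1 by ring, Real.rpow_add htp, Real.rpow_one]
      ring
    rw [key]
    have : Real.exp (-w.re * t) ≤ Real.exp (-ε * t) := by
      apply Real.exp_le_exp.mpr
      nlinarith
    have hpow : (0:ℝ) ≤ t ^ μ := (Real.rpow_pos_of_pos htp μ).le
    nlinarith
  · filter_upwards [] with t w _
    have h : HasDerivAt (fun w : ℂ => -(w * (t:ℂ))) (-(t:ℂ)) w := (hasDerivAt_mul_const _).neg
    exact h.cexp.const_mul _

lemma key_eq {μ : ℝ} (hμ : 0 < μ) {z : ℂ} (hz : 0 < z.re) :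
    ∫ t in Ioi (0:ℝ), (t:ℂ) ^ ((μ:ℂ) - 1) * Complex.exp (-(z * t))
      = Complex.Gamma μ * z ^ (-(μ:ℂ)) := by
  set F : ℂ → ℂ := fun w => ∫ t in Ioi (0:ℝ), (t:ℂ) ^ ((μ:ℂ) - 1) * Complex.exp (-(w * t))
  set G : ℂ → ℂ := fun w => Complex.Gamma μ * w ^ (-(μ:ℂ))
  set U : Set ℂ := {w : ℂ | 0 < w.re}
  have hUo : IsOpen U := isOpen_lt continuous_const Complex.continuous_re
  have hF : AnalyticOnNhd ℂ F U := by
    apply DifferentiableOn.analyticOnNhd _ hUo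
    intro w hw
    exact (aux_deriv hμ hw).differentiableAt.differentiableWithinAt
  have hG : AnalyticOnNhd ℂ G U := by
    apply DifferentiableOn.analyticOnNhd _ hUo
    intro w hw
    apply DifferentiableAt.differentiableWithinAt
    exact (differentiableAt_const _).mul
      (differentiableAt_id.cpow (differentiableAt_const _) (Or.inl hw))
  have hpre : IsPreconnected U := (convex_halfSpace_re_gt 0).isPreconnected
  have h1U : (1:ℂ) ∈ U := by simp [U]
  have hreal : ∀ r : ℝ, 0 < r → F r = G r := by
    intro r hr
    have := Complex.integral_cpow_mul_exp_neg_mul_Ioi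
      (a := (μ:ℂ)) (r := r) (by simpa using hμ) hr
    simp only [F, G]
    rw [this, Complex.cpow_neg, one_div, Complex.inv_cpow _ _ (by
      rw [Complex.arg_ofReal_of_nonneg hr.le]; exact Real.pi_ne_zero.symm), mul_comm]
  have hfreq : ∃ᶠ w in nhdsWithin (1:ℂ) {(1:ℂ)}ᶜ, F w = G w := by
    have htend : Tendsto (fun n : ℕ => ((1 + ((n:ℝ)+1)⁻¹ : ℝ) : ℂ)) atTop
        (nhdsWithin (1:ℂ) {(1:ℂ)}ᶜ) := by
      rw [tendsto_nhdsWithin_iff]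
      constructor
      · have : Tendsto (fun n : ℕ => (1 + ((n:ℝ)+1)⁻¹ : ℝ)) atTop (nhds 1) := by
          have h0 : Tendsto (fun n : ℕ => ((n:ℝ)+1)⁻¹) atTop (nhds 0) :=
            tendsto_one_div_add_atTop_nhds_zero_nat.congr (by intro n; simp [one_div])
          simpa using tendsto_const_nhds.add h0
        have h2 := (Complex.continuous_ofReal.tendsto 1).comp this
        simpa [Function.comp_def] using h2
      · filter_upwards [] with n
        simp only [Set.mem_compl_iff, Set.mem_singleton_iff]
        intro h
        have : (1 + ((n:ℝ)+1)⁻¹ : ℝ) = 1 := by exact_mod_cast h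
        have hp : (0:ℝ) < ((n:ℝ)+1)⁻¹ := by positivity
        linarith
    exact htend.frequently (Frequently.of_forall fun n => hreal _ (by positivity))
  exact hF.eqOn_of_preconnected_of_frequently_eq hG hpre h1U hfreq hz

theorem stmt1 (μ β δ : ℝ) (hμ : 0 < μ) (hβ : 0 < β) :
    ∫ x in Set.Ioi (0 : ℝ), x ^ (μ - 1) * Real.exp (-β * x) * Real.sin (δ * x)
      = Real.Gamma μ * Real.sin (μ * Real.arctan (δ / β)) /
          (β ^ 2 + δ ^ 2) ^ (μ / 2) := by
  set z : ℂ := (β:ℂ) - (δ:ℂ) * Complex.I with hzdef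
  have hzre : z.re = β := by simp [z]
  have hzim : z.im = -δ := by simp [z]
  have hz : 0 < z.re := by rwa [hzre]
  have hkey := key_eq hμ hz
  have hInt := aux_int_cexp hμ hz
  have hsq : (0:ℝ) < β ^ 2 + δ ^ 2 := by positivity
  set r : ℝ := Real.sqrt (β ^ 2 + δ ^ 2) with hrdef
  have hr : 0 < r := Real.sqrt_pos.mpr hsq
  set θ : ℝ := Real.arctan (δ / β) with hθdef
  have hsqrt : Real.sqrt (1 + (δ / β) ^ 2) = r / β := by
    rw [show (1 + (δ / β) ^ 2) = (β ^ 2 + δ ^ 2) / β ^ 2 by field_simp,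
      Real.sqrt_div hsq.le, Real.sqrt_sq hβ.le]
  have hcos : r * Real.cos θ = β := by
    rw [hθdef, Real.cos_arctan, hsqrt]
    field_simp
  have hsin : r * Real.sin θ = δ := by
    rw [hθdef, Real.sin_arctan, hsqrt]
    field_simp
  have hzeq : z = (r:ℂ) * (Complex.cos (-θ:ℝ) + Complex.sin (-θ:ℝ) * Complex.I) := by
    rw [← Complex.ofReal_cos, ← Complex.ofReal_sin]
    apply Complex.ext
    · simp [hzre, Real.cos_neg, Complex.cos_ofReal_re, ← hcos]
    · simp [hzim, Real.sin_neg, Complex.sin_ofReal_re, ← hsin]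
  have hθmem : -θ ∈ Set.Ioc (-Real.pi) Real.pi := by
    have h1 := Real.arctan_lt_pi_div_two (δ / β)
    have h2 := Real.neg_pi_div_two_lt_arctan (δ / β)
    have h3 := Real.pi_pos
    rw [← hθdef] at h1 h2
    exact ⟨by linarith, by linarith⟩
  have harg : z.arg = -θ := by
    rw [hzeq]; exact Complex.arg_mul_cos_add_sin_mul_I hr hθmem
  have habs : ‖z‖ = r := by
    rw [hzeq, norm_mul, Complex.norm_real, Real.norm_eq_abs, abs_of_pos hr, Complex.norm_cos_add_sin_mul_I]
    ring
  have hz0 : z ≠ 0 := by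
    intro h
    rw [h] at hzre
    simp at hzre
    exact hβ.ne' hzre.symm
  have him : (∫ t in Ioi (0:ℝ), (t:ℂ) ^ ((μ:ℂ) - 1) * Complex.exp (-(z * t))).im
      = ∫ t in Ioi (0:ℝ), ((t:ℂ) ^ ((μ:ℂ) - 1) * Complex.exp (-(z * t))).im :=
    (integral_im hInt).symm
  have hLHS : ∫ x in Set.Ioi (0 : ℝ), x ^ (μ - 1) * Real.exp (-β * x) * Real.sin (δ * x)
      = (∫ t in Ioi (0:ℝ), (t:ℂ) ^ ((μ:ℂ) - 1) * Complex.exp (-(z * t))).im := by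
    rw [him]
    apply setIntegral_congr_fun measurableSet_Ioi
    intro t ht
    have htp : (0:ℝ) < t := ht
    have h1 : ((t:ℂ)) ^ ((μ:ℂ) - 1) = ((t ^ (μ - 1) : ℝ) : ℂ) := by
      rw [Complex.ofReal_cpow htp.le]
      norm_num
    dsimp only
    rw [h1]
    simp only [Complex.mul_im, Complex.ofReal_re, Complex.ofReal_im, zero_mul, add_zero,
      Complex.exp_im]
    have h2 : (-(z * t)).re = -β * t := by
      simp [Complex.mul_re, hzre, hzim]
    have h3 : (-(z * t)).im = δ * t := by
      simp [Complex.mul_im, hzre, hzim]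
    rw [h2, h3]
    ring
  rw [hLHS, hkey]
  rw [Complex.Gamma_ofReal, Complex.cpow_def_of_ne_zero hz0]
  have hexpand : ((Real.Gamma μ : ℂ) * Complex.exp (Complex.log z * -(μ:ℂ))).im
      = Real.Gamma μ * (Complex.exp (Complex.log z * -(μ:ℂ))).im := by
    simp [Complex.mul_im]
  rw [hexpand, Complex.exp_im]
  have h4 : (Complex.log z * -(μ:ℂ)).re = Real.log r * (-μ) := by
    simp [Complex.mul_re, Complex.log_re, habs]
  have h5 : (Complex.log z * -(μ:ℂ)).im = μ * θ := by
    simp [Complex.mul_im, Complex.log_im, harg]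
    ring
  rw [h4, h5, ← Real.rpow_def_of_pos hr]
  have h6 : r ^ (-μ) = ((β ^ 2 + δ ^ 2) ^ (μ / 2))⁻¹ := by
    rw [hrdef, Real.sqrt_eq_rpow, ← Real.rpow_mul hsq.le,
      show (1/2:ℝ) * (-μ) = -(μ/2) by ring, Real.rpow_neg hsq.le]
  rw [h6]
  ring
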